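/- Under the setting of the EDMD theorem (g₁,…,g_{n_g} linearly independent, P_𝒢 = [⟨v_k, g_l⟩] of full column rank, G invertible, K̂_U = Σ_{j,l}[M* G^{-1}]_{jl} g_j ⊗ g_l with M* = (P_𝒢ᵀP_𝒢)^{-1}P_𝒢ᵀY), for each λ > 0 let K̂_{𝒢,λ} be the unique solution of min_{K ∈ L_𝒢} E(K) + λ‖K‖². Then K̂_{𝒢,λ} converges to K̂_U in the operator norm as λ → 0⁺, and K̂_{𝒢,λ} converges to the zero operator in the operator norm as λ → ∞. -/

import Mathlib

open scoped InnerProductSpace Matrix Topology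

/-- The rank-one operator `v ⊗ u : w ↦ ⟪u, w⟫ v` on a real Hilbert space. -/
noncomputable def rankOne {H : Type*} [NormedAddCommGroup H] [InnerProductSpace ℝ H]
    (v u : H) : H →L[ℝ] H := (innerSL ℝ u).smulRight v

/-- The Gram matrix of a finite family of vectors. -/
noncomputable def gram {H : Type*} [NormedAddCommGroup H] [InnerProductSpace ℝ H]
    {n : ℕ} (u : Fin n → H) : Matrix (Fin n) (Fin n) ℝ :=
  Matrix.of fun i j => ⟪u i, u j⟫_ℝ

private lemma aux7_pyth {ns ng : ℕ} (P : Matrix (Fin ns) (Fin ng) ℝ)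
    (Y : Matrix (Fin ns) (Fin ng) ℝ) (M B : Matrix (Fin ng) (Fin ng) ℝ)
    (h : Pᵀ * (Y - P * M) = 0) :
    (∑ k, ∑ l, (Y k l - (P * B) k l) ^ 2)
      = (∑ k, ∑ l, (Y k l - (P * M) k l) ^ 2)
        + ∑ k, ∑ l, ((P * (M - B)) k l) ^ 2 := by
  have key : ∀ j l, ∑ k, P k j * (Y k l - (P * M) k l) = 0 := by
    intro j l
    have h2 := congrFun (congrFun h j) l
    simpa [Matrix.mul_apply, Matrix.sub_apply, Matrix.transpose_apply] using h2
  have cross : ∑ k, ∑ l, (Y k l - (P * M) k l) * (P * (M - B)) k l = 0 := by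
    have e1 : ∀ k l, (Y k l - (P * M) k l) * (P * (M - B)) k l
        = ∑ j, P k j * (Y k l - (P * M) k l) * (M - B) j l := by
      intro k l
      rw [Matrix.mul_apply (M := P) (N := M - B), Finset.mul_sum]
      exact Finset.sum_congr rfl fun j _ => by ring
    calc ∑ k, ∑ l, (Y k l - (P * M) k l) * (P * (M - B)) k l
        = ∑ k, ∑ l, ∑ j, P k j * (Y k l - (P * M) k l) * (M - B) j l := by
          simp_rw [e1]
      _ = ∑ k, ∑ j, ∑ l, P k j * (Y k l - (P * M) k l) * (M - B) j l :=
          Finset.sum_congr rfl fun k _ => Finset.sum_comm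
      _ = ∑ j, ∑ k, ∑ l, P k j * (Y k l - (P * M) k l) * (M - B) j l :=
          Finset.sum_comm
      _ = ∑ j, ∑ l, ∑ k, P k j * (Y k l - (P * M) k l) * (M - B) j l :=
          Finset.sum_congr rfl fun j _ => Finset.sum_comm
      _ = ∑ j, ∑ l, (∑ k, P k j * (Y k l - (P * M) k l)) * (M - B) j l := by
          refine Finset.sum_congr rfl fun j _ => Finset.sum_congr rfl fun l _ => ?_
          rw [Finset.sum_mul]
      _ = 0 := by simp [key]
  have ent : ∀ k l, Y k l - (P * B) k l
      = (Y k l - (P * M) k l) + (P * (M - B)) k l := by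
    intro k l
    have h2 : (P * (M - B)) k l = (P * M) k l - (P * B) k l := by
      rw [Matrix.mul_sub, Matrix.sub_apply]
    rw [h2]; ring
  calc ∑ k, ∑ l, (Y k l - (P * B) k l) ^ 2
      = ∑ k, ∑ l, ((Y k l - (P * M) k l) ^ 2 + ((P * (M - B)) k l) ^ 2
          + 2 * ((Y k l - (P * M) k l) * (P * (M - B)) k l)) := by
        refine Finset.sum_congr rfl fun k _ => Finset.sum_congr rfl fun l _ => ?_
        rw [ent]; ring
    _ = (∑ k, ∑ l, (Y k l - (P * M) k l) ^ 2) + (∑ k, ∑ l, ((P * (M - B)) k l) ^ 2)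
        + 2 * ∑ k, ∑ l, (Y k l - (P * M) k l) * (P * (M - B)) k l := by
        simp only [Finset.sum_add_distrib, ← Finset.mul_sum]
    _ = _ := by rw [cross, mul_zero, add_zero]

private lemma aux7_inj {ns ng : ℕ} (P : Matrix (Fin ns) (Fin ng) ℝ) (h : P.rank = ng) :
    Function.Injective P.mulVec := by
  have hd : Module.finrank ℝ (LinearMap.range P.mulVecLin) = ng := h
  have h1 := LinearMap.finrank_range_add_finrank_ker P.mulVecLin
  rw [Module.finrank_fin_fun, hd] at h1
  have h2 : Module.finrank ℝ (LinearMap.ker P.mulVecLin) = 0 := by omega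
  have hker : LinearMap.ker P.mulVecLin = ⊥ := Submodule.finrank_eq_zero.mp h2
  have := LinearMap.ker_eq_bot.mp hker
  simpa only [Matrix.coe_mulVecLin] using this

private lemma aux7_unit {ns ng : ℕ} (P : Matrix (Fin ns) (Fin ng) ℝ) (h : P.rank = ng) :
    IsUnit (Pᵀ * P).det := by
  have h2 : (Pᵀ * P).rank = ng := by rw [Matrix.rank_transpose_mul_self, h]
  have hd : Module.finrank ℝ (LinearMap.range (Pᵀ * P).mulVecLin) = ng := h2
  have hsurj : Function.Surjective (Pᵀ * P).mulVecLin := by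
    rw [← LinearMap.range_eq_top]
    apply Submodule.eq_top_of_finrank_eq
    rw [hd, Module.finrank_fin_fun]
  have hinj : Function.Injective (Pᵀ * P).mulVecLin :=
    LinearMap.injective_iff_surjective.mpr hsurj
  have hinj' : Function.Injective (Pᵀ * P).mulVec := by
    simpa only [Matrix.coe_mulVecLin] using hinj
  exact (Matrix.isUnit_iff_isUnit_det _).mp (Matrix.mulVec_injective_iff_isUnit.mp hinj')

private lemma aux7_anti {ns ng : ℕ} (P : Matrix (Fin ns) (Fin ng) ℝ) (hPr : P.rank = ng) :
    ∃ c : ℝ, 0 < c ∧ ∀ M : Matrix (Fin ng) (Fin ng) ℝ, ∀ j l,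
      |M j l| ≤ c * Real.sqrt (∑ k, ∑ l', ((P * M) k l') ^ 2) := by
  let ψ : EuclideanSpace ℝ (Fin ng × Fin ng) →ₗ[ℝ] EuclideanSpace ℝ (Fin ns × Fin ng) :=
    { toFun := fun x => WithLp.toLp 2 (fun p : Fin ns × Fin ng => ∑ j, P p.1 j * x (j, p.2))
      map_add' := by
        intro x y; ext p
        simp [mul_add, Finset.sum_add_distrib]
      map_smul' := by
        intro c x; ext p
        show ∑ j, P p.1 j * (c * x (j, p.2)) = c * ∑ j, P p.1 j * x (j, p.2)
        rw [Finset.mul_sum]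
        exact Finset.sum_congr rfl fun j _ => by ring }
  have hker : LinearMap.ker ψ = ⊥ := by
    rw [LinearMap.ker_eq_bot']
    intro x hx
    have hcol : ∀ l, P.mulVec (fun j => x (j, l)) = 0 := by
      intro l; funext k
      have h2 := congrArg (fun z => z (k, l)) hx
      have h3 : ∑ j, P k j * x (j, l) = 0 := h2
      simpa [Matrix.mulVec, dotProduct] using h3
    have hinj := aux7_inj P hPr
    ext p
    have h0 : (fun j => x (j, p.2)) = (0 : Fin ng → ℝ) := by
      apply hinj
      rw [hcol p.2, Matrix.mulVec_zero]
    exact congrFun h0 p.1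
  obtain ⟨c, hc, hanti⟩ := ψ.exists_antilipschitzWith hker
  refine ⟨c, hc, fun M j l => ?_⟩
  set x : EuclideanSpace ℝ (Fin ng × Fin ng) := WithLp.toLp 2 (fun p => M p.1 p.2) with hxdef
  have h1 : |M j l| ≤ ‖x‖ := by
    rw [EuclideanSpace.norm_eq, ← Real.sqrt_sq_eq_abs]
    apply Real.sqrt_le_sqrt
    have : (M j l) ^ 2 = ‖x (j, l)‖ ^ 2 := by
      rw [Real.norm_eq_abs, sq_abs]
    rw [this]
    exact Finset.single_le_sum (f := fun p => ‖x p‖ ^ 2) (fun p _ => by positivity)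
      (Finset.mem_univ (j, l))
  have h2 : ‖x‖ ≤ c * ‖ψ x‖ := by
    have := hanti.le_mul_dist x 0
    simpa [dist_zero_right, map_zero] using this
  have h3 : ‖ψ x‖ = Real.sqrt (∑ k, ∑ l', ((P * M) k l') ^ 2) := by
    rw [EuclideanSpace.norm_eq]
    congr 1
    rw [Fintype.sum_prod_type]
    refine Finset.sum_congr rfl fun k _ => Finset.sum_congr rfl fun l' _ => ?_
    have : ψ x (k, l') = (P * M) k l' := by
      show ∑ j', P k j' * M j' l' = (P * M) k l'
      rw [Matrix.mul_apply]
    rw [this, Real.norm_eq_abs, sq_abs]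
  calc |M j l| ≤ ‖x‖ := h1
    _ ≤ c * ‖ψ x‖ := h2
    _ = c * Real.sqrt (∑ k, ∑ l', ((P * M) k l') ^ 2) := by rw [h3]

theorem statement7 {H : Type*} [NormedAddCommGroup H] [InnerProductSpace ℝ H]
    [CompleteSpace H] {ns ng : ℕ} (v : Fin ns → H) (g : Fin ng → H)
    (hg : LinearIndependent ℝ g) (hG : IsUnit (gram g).det)
    (P : Matrix (Fin ns) (Fin ng) ℝ) (hP : ∀ k l, P k l = ⟪v k, g l⟫_ℝ)
    (hPrank : P.rank = ng)
    (Y : Matrix (Fin ns) (Fin ng) ℝ)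
    (Mstar : Matrix (Fin ng) (Fin ng) ℝ) (hMstar : Mstar = (Pᵀ * P)⁻¹ * Pᵀ * Y)
    (KhatU : H →L[ℝ] H)
    (hKhatU : KhatU = ∑ j, ∑ l, (Mstar * (gram g)⁻¹) j l • rankOne (g j) (g l))
    (LG : Set (H →L[ℝ] H))
    (hLG : LG = {S : H →L[ℝ] H | ∀ x ∈ Submodule.span ℝ (Set.range g),
        S x ∈ Submodule.span ℝ (Set.range g)})
    (K : ℝ → (H →L[ℝ] H))
    -- for every `λ > 0`, `K λ` is the unique solution of the regularized problem over `L_𝒢`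
    (hKmem : ∀ lam > (0 : ℝ), K lam ∈ LG)
    (hKmin : ∀ lam > (0 : ℝ), ∀ S ∈ LG,
      (∑ k, ∑ l, (Y k l - ⟪v k, (K lam) (g l)⟫_ℝ) ^ 2) + lam * ‖K lam‖ ^ 2 ≤
      (∑ k, ∑ l, (Y k l - ⟪v k, S (g l)⟫_ℝ) ^ 2) + lam * ‖S‖ ^ 2)
    (hKuniq : ∀ lam > (0 : ℝ), ∀ S ∈ LG,
      (∀ S' ∈ LG,
        (∑ k, ∑ l, (Y k l - ⟪v k, S (g l)⟫_ℝ) ^ 2) + lam * ‖S‖ ^ 2 ≤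
        (∑ k, ∑ l, (Y k l - ⟪v k, S' (g l)⟫_ℝ) ^ 2) + lam * ‖S'‖ ^ 2) →
      S = K lam) :
    Filter.Tendsto K (𝓝[>] (0 : ℝ)) (𝓝 KhatU) ∧
    Filter.Tendsto K Filter.atTop (𝓝 (0 : H →L[ℝ] H)) := by
  classical
  set 𝒢 : Submodule ℝ H := Submodule.span ℝ (Set.range g) with h𝒢
  haveI : FiniteDimensional ℝ 𝒢 := by
    rw [h𝒢]; exact FiniteDimensional.span_of_finite ℝ (Set.finite_range g)
  have hmemg : ∀ l, g l ∈ 𝒢 := by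
    intro l; rw [h𝒢]; exact Submodule.subset_span ⟨l, rfl⟩
  have hEnn : ∀ S : H →L[ℝ] H, (0:ℝ) ≤ ∑ k, ∑ l, (Y k l - ⟪v k, S (g l)⟫_ℝ) ^ 2 :=
    fun S => Finset.sum_nonneg fun k _ => Finset.sum_nonneg fun l _ => sq_nonneg _
  have h0LG : (0 : H →L[ℝ] H) ∈ LG := by
    rw [hLG]; intro x _; simpa using Submodule.zero_mem _
  -- Part 2 : λ → ∞
  have partB : Filter.Tendsto K Filter.atTop (𝓝 (0 : H →L[ℝ] H)) := by
    rw [tendsto_zero_iff_norm_tendsto_zero]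
    have c0 : (0:ℝ) ≤ ∑ k, ∑ l, (Y k l) ^ 2 :=
      Finset.sum_nonneg fun k _ => Finset.sum_nonneg fun l _ => sq_nonneg _
    refine squeeze_zero' (g := fun lam => Real.sqrt ((∑ k, ∑ l, (Y k l) ^ 2) / lam))
      (Filter.Eventually.of_forall fun lam => norm_nonneg _) ?_ ?_
    · filter_upwards [Filter.eventually_gt_atTop 0] with lam hlam
      have hb := hKmin lam hlam 0 h0LG
      simp only [ContinuousLinearMap.zero_apply, inner_zero_right, sub_zero, norm_zero] at hb
      have h1 : lam * ‖K lam‖ ^ 2 ≤ ∑ k, ∑ l, (Y k l) ^ 2 := by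
        nlinarith [hEnn (K lam)]
      have h2 : ‖K lam‖ ^ 2 ≤ (∑ k, ∑ l, (Y k l) ^ 2) / lam := by
        rw [le_div_iff₀ hlam]; linarith
      calc ‖K lam‖ = Real.sqrt (‖K lam‖ ^ 2) := (Real.sqrt_sq (norm_nonneg _)).symm
        _ ≤ _ := Real.sqrt_le_sqrt h2
    · have hdiv : Filter.Tendsto (fun lam : ℝ => (∑ k, ∑ l, (Y k l) ^ 2) / lam)
          Filter.atTop (𝓝 0) := tendsto_const_nhds.div_atTop Filter.tendsto_id
      have := (Real.continuous_sqrt.tendsto 0).comp hdiv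
      simpa [Function.comp_def] using this
  refine ⟨?_, partB⟩
  -- setup for λ → 0⁺
  set b : Module.Basis (Fin ng) ℝ 𝒢 := Module.Basis.span hg with hbdef
  have hbg : ∀ j, (b j : H) = g j := by
    intro j; rw [hbdef]; exact congrArg Subtype.val (Module.Basis.span_apply hg j)
  set B' : ℝ → Matrix (Fin ng) (Fin ng) ℝ :=
    fun lam => Matrix.of fun j l => b.repr (𝒢.orthogonalProjectionOnto (K lam (g l))) j
    with hB'def
  have hGinv : (gram g)⁻¹ * gram g = 1 := Matrix.nonsing_inv_mul _ hG
  -- evaluation of the rank-one sums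
  have hFapp : ∀ (C : Matrix (Fin ng) (Fin ng) ℝ) (x : H),
      (∑ j, ∑ m, C j m • rankOne (g j) (g m)) x
        = ∑ j, (C *ᵥ (fun m => ⟪g m, x⟫_ℝ)) j • g j := by
    intro C x
    simp only [ContinuousLinearMap.coe_sum', Finset.sum_apply,
      ContinuousLinearMap.coe_smul', Pi.smul_apply, rankOne,
      ContinuousLinearMap.smulRight_apply, innerSL_apply_apply, Matrix.mulVec,
      dotProduct, Finset.sum_smul, smul_smul]
  have hFmem : ∀ C : Matrix (Fin ng) (Fin ng) ℝ,
      (∑ j, ∑ m, C j m • rankOne (g j) (g m)) ∈ LG := by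
    intro C
    rw [hLG]
    intro x _
    rw [hFapp]
    exact Submodule.sum_mem _ fun j _ => Submodule.smul_mem _ _ (hmemg j)
  have hFip : ∀ (C : Matrix (Fin ng) (Fin ng) ℝ) (k : Fin ns) (l : Fin ng),
      ⟪v k, (∑ j, ∑ m, C j m • rankOne (g j) (g m)) (g l)⟫_ℝ
        = (P * C * gram g) k l := by
    intro C k l
    rw [hFapp, inner_sum]
    simp only [real_inner_smul_right, Matrix.mulVec, dotProduct,
      Matrix.mul_apply, gram, Matrix.of_apply]
    simp_rw [Finset.sum_mul]
    rw [Finset.sum_comm]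
    refine Finset.sum_congr rfl fun m _ => Finset.sum_congr rfl fun j _ => ?_
    rw [← hP]
    ring
  have hKU_LG : KhatU ∈ LG := by rw [hKhatU]; exact hFmem _
  have hKUip : ∀ k l, ⟪v k, KhatU (g l)⟫_ℝ = (P * Mstar) k l := by
    intro k l
    rw [hKhatU, hFip]
    rw [Matrix.mul_assoc P _ _, Matrix.mul_assoc Mstar _ _, hGinv, Matrix.mul_one]
  have hPtP := aux7_unit P hPrank
  have hPtR : Pᵀ * (Y - P * Mstar) = 0 := by
    rw [hMstar, Matrix.mul_sub]
    have h2 : Pᵀ * (P * ((Pᵀ * P)⁻¹ * Pᵀ * Y)) = Pᵀ * Y := by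
      rw [← Matrix.mul_assoc, ← Matrix.mul_assoc, ← Matrix.mul_assoc,
        Matrix.mul_nonsing_inv _ hPtP, Matrix.one_mul]
    rw [h2, sub_self]
  -- orthogonal projection facts
  have hproj_self : ∀ x ∈ 𝒢, ((𝒢.orthogonalProjectionOnto x : 𝒢) : H) = x :=
    fun x hx => Submodule.starProjection_eq_self_iff.mpr hx
  have hproj_inner : ∀ (x : H) (m : Fin ng),
      ⟪g m, ((𝒢.orthogonalProjectionOnto x : 𝒢) : H)⟫_ℝ = ⟪g m, x⟫_ℝ := by
    intro x m
    have horth : x - ((𝒢.orthogonalProjectionOnto x : 𝒢) : H) ∈ 𝒢ᗮ :=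
      Submodule.sub_starProjection_mem_orthogonal x
    have h0 := (Submodule.mem_orthogonal 𝒢 _).mp horth (g m) (hmemg m)
    rw [inner_sub_right] at h0
    linarith
  -- representation of K lam on the basis vectors
  have hrepr : ∀ lam, 0 < lam → ∀ l, K lam (g l) = ∑ j, B' lam j l • g j := by
    intro lam hlam l
    have hmem := hKmem lam hlam
    rw [hLG] at hmem
    have hy : K lam (g l) ∈ 𝒢 := hmem (g l) (hmemg l)
    have hco : 𝒢.orthogonalProjectionOnto (K lam (g l)) = ⟨K lam (g l), hy⟩ :=
      Subtype.ext (hproj_self _ hy)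
    calc K lam (g l) = ((⟨K lam (g l), hy⟩ : 𝒢) : H) := rfl
      _ = ((∑ j, b.repr ⟨K lam (g l), hy⟩ j • b j : 𝒢) : H) := by rw [b.sum_repr]
      _ = ∑ j, b.repr ⟨K lam (g l), hy⟩ j • g j := by
          rw [Submodule.coe_sum]
          exact Finset.sum_congr rfl fun j _ => by rw [Submodule.coe_smul, hbg]
      _ = ∑ j, B' lam j l • g j := by
          refine Finset.sum_congr rfl fun j _ => ?_
          rw [hB'def]
          simp only [Matrix.of_apply, hco]
  have hip : ∀ lam, 0 < lam → ∀ k l,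
      ⟪v k, K lam (g l)⟫_ℝ = (P * B' lam) k l := by
    intro lam hlam k l
    rw [hrepr lam hlam l, inner_sum]
    simp only [real_inner_smul_right]
    rw [Matrix.mul_apply]
    refine Finset.sum_congr rfl fun j _ => ?_
    rw [← hP]
    ring
  -- key quantitative bound
  have hkey : ∀ lam, 0 < lam →
      ∑ k, ∑ l, ((P * (Mstar - B' lam)) k l) ^ 2 ≤ lam * ‖KhatU‖ ^ 2 := by
    intro lam hlam
    have hmin := hKmin lam hlam KhatU hKU_LG
    have e1 : (∑ k, ∑ l, (Y k l - ⟪v k, K lam (g l)⟫_ℝ) ^ 2)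
        = ∑ k, ∑ l, (Y k l - (P * B' lam) k l) ^ 2 :=
      Finset.sum_congr rfl fun k _ => Finset.sum_congr rfl fun l _ => by
        rw [hip lam hlam]
    have e2 : (∑ k, ∑ l, (Y k l - ⟪v k, KhatU (g l)⟫_ℝ) ^ 2)
        = ∑ k, ∑ l, (Y k l - (P * Mstar) k l) ^ 2 :=
      Finset.sum_congr rfl fun k _ => Finset.sum_congr rfl fun l _ => by
        rw [hKUip]
    rw [e1, e2] at hmin
    have hpyth := aux7_pyth P Y Mstar (B' lam) hPtR
    have hnn : (0:ℝ) ≤ lam * ‖K lam‖ ^ 2 := mul_nonneg hlam.le (sq_nonneg _)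
    linarith
  -- entrywise convergence of B'
  obtain ⟨c, hc, hcb⟩ := aux7_anti P hPrank
  have hbound : ∀ lam, 0 < lam → ∀ j m,
      |Mstar j m - B' lam j m| ≤ c * (Real.sqrt lam * ‖KhatU‖) := by
    intro lam hlam j m
    have h1 := hcb (Mstar - B' lam) j m
    have h2 : Real.sqrt (∑ k, ∑ l', ((P * (Mstar - B' lam)) k l') ^ 2)
        ≤ Real.sqrt (lam * ‖KhatU‖ ^ 2) := Real.sqrt_le_sqrt (hkey lam hlam)
    have h3 : Real.sqrt (lam * ‖KhatU‖ ^ 2) = Real.sqrt lam * ‖KhatU‖ := by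
      rw [Real.sqrt_mul hlam.le, Real.sqrt_sq (norm_nonneg _)]
    calc |Mstar j m - B' lam j m| = |(Mstar - B' lam) j m| := by
          rw [Matrix.sub_apply]
      _ ≤ c * Real.sqrt (∑ k, ∑ l', ((P * (Mstar - B' lam)) k l') ^ 2) := h1
      _ ≤ c * (Real.sqrt lam * ‖KhatU‖) := by
          rw [← h3]; exact mul_le_mul_of_nonneg_left h2 hc.le
  have hBt : ∀ j m, Filter.Tendsto (fun lam => B' lam j m) (𝓝[>] (0:ℝ))
      (𝓝 (Mstar j m)) := by
    intro j m
    rw [tendsto_iff_dist_tendsto_zero]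
    have hs : Filter.Tendsto (fun lam : ℝ => c * (Real.sqrt lam * ‖KhatU‖))
        (𝓝[>] (0:ℝ)) (𝓝 0) := by
      have h1 : Filter.Tendsto Real.sqrt (𝓝[>] (0:ℝ)) (𝓝 0) :=
        (Real.continuous_sqrt.tendsto' 0 0 Real.sqrt_zero).mono_left nhdsWithin_le_nhds
      simpa using (h1.mul_const ‖KhatU‖).const_mul c
    refine squeeze_zero' (Filter.Eventually.of_forall fun lam => dist_nonneg) ?_ hs
    filter_upwards [self_mem_nhdsWithin] with lam hlam
    rw [Real.dist_eq, abs_sub_comm]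
    exact hbound lam hlam j m
  -- structure of K lam
  have hstruct : ∀ lam, 0 < lam →
      K lam = ∑ j, ∑ m, ((B' lam * (gram g)⁻¹) j m) • rankOne (g j) (g m) := by
    intro lam hlam
    set Pr : H →L[ℝ] H := 𝒢.subtypeL.comp (𝒢.orthogonalProjectionOnto : H →L[ℝ] 𝒢)
      with hPrdef
    have hPrapp : ∀ x : H, Pr x = ((𝒢.orthogonalProjectionOnto x : 𝒢) : H) := fun x => rfl
    have hPrmem : ∀ x, Pr x ∈ 𝒢 := fun x => by rw [hPrapp]; exact SetLike.coe_mem _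
    have hPr_self : ∀ x ∈ 𝒢, Pr x = x := fun x hx => by
      rw [hPrapp]; exact hproj_self x hx
    have hPrnorm : ∀ x, ‖Pr x‖ ≤ ‖x‖ := by
      intro x
      calc ‖Pr x‖ = ‖𝒢.orthogonalProjectionOnto x‖ := rfl
        _ ≤ ‖(𝒢.orthogonalProjectionOnto : H →L[ℝ] 𝒢)‖ * ‖x‖ :=
            (𝒢.orthogonalProjectionOnto : H →L[ℝ] 𝒢).le_opNorm x
        _ ≤ 1 * ‖x‖ :=
            mul_le_mul_of_nonneg_right (Submodule.orthogonalProjectionOnto_norm_le 𝒢) (norm_nonneg x)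
        _ = ‖x‖ := one_mul _
    have hTmem : ∀ x ∈ 𝒢, K lam x ∈ 𝒢 := by
      have := hKmem lam hlam; rw [hLG] at this; exact this
    set S : H →L[ℝ] H := Pr.comp ((K lam).comp Pr) with hSdef
    have hSapp : ∀ x, S x = Pr (K lam (Pr x)) := fun x => rfl
    have hS_LG : S ∈ LG := by
      rw [hLG]; intro x _; rw [hSapp]; exact hPrmem _
    have hSg : ∀ l, S (g l) = K lam (g l) := by
      intro l
      rw [hSapp, hPr_self _ (hmemg l), hPr_self _ (hTmem _ (hmemg l))]
    have hSnorm : ‖S‖ ≤ ‖K lam‖ := by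
      refine ContinuousLinearMap.opNorm_le_bound _ (norm_nonneg _) fun x => ?_
      calc ‖S x‖ = ‖Pr (K lam (Pr x))‖ := by rw [hSapp]
        _ ≤ ‖K lam (Pr x)‖ := hPrnorm _
        _ ≤ ‖K lam‖ * ‖Pr x‖ := (K lam).le_opNorm _
        _ ≤ ‖K lam‖ * ‖x‖ := mul_le_mul_of_nonneg_left (hPrnorm x) (norm_nonneg _)
    have hSeq : S = K lam := by
      refine hKuniq lam hlam S hS_LG fun S' hS' => ?_
      have hEeq : (∑ k, ∑ l, (Y k l - ⟪v k, S (g l)⟫_ℝ) ^ 2)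
          = ∑ k, ∑ l, (Y k l - ⟪v k, K lam (g l)⟫_ℝ) ^ 2 :=
        Finset.sum_congr rfl fun k _ => Finset.sum_congr rfl fun l _ => by rw [hSg]
      have hsq : ‖S‖ ^ 2 ≤ ‖K lam‖ ^ 2 := by
        have := pow_le_pow_left₀ (norm_nonneg S) hSnorm 2
        simpa using this
      calc (∑ k, ∑ l, (Y k l - ⟪v k, S (g l)⟫_ℝ) ^ 2) + lam * ‖S‖ ^ 2
          ≤ (∑ k, ∑ l, (Y k l - ⟪v k, K lam (g l)⟫_ℝ) ^ 2) + lam * ‖K lam‖ ^ 2 := by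
            rw [hEeq]
            exact add_le_add_right (mul_le_mul_of_nonneg_left hsq hlam.le) _
        _ ≤ _ := hKmin lam hlam S' hS'
    -- pointwise identity
    ext x
    have hfix : K lam x = Pr (K lam (Pr x)) := by
      have h := congrFun (congrArg (DFunLike.coe) hSeq) x
      exact h.symm.trans (hSapp x)
    have hpx : Pr x ∈ 𝒢 := hPrmem x
    set cvec : Fin ng → ℝ := fun l => b.repr ⟨Pr x, hpx⟩ l with hcvec
    have h1 : Pr x = ∑ l, cvec l • g l := by
      calc Pr x = ((⟨Pr x, hpx⟩ : 𝒢) : H) := rfl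
        _ = ((∑ l, b.repr ⟨Pr x, hpx⟩ l • b l : 𝒢) : H) := by rw [b.sum_repr]
        _ = ∑ l, cvec l • g l := by
            rw [Submodule.coe_sum]
            exact Finset.sum_congr rfl fun l _ => by rw [Submodule.coe_smul, hbg]
    have h2 : K lam x = ∑ l, cvec l • K lam (g l) := by
      calc K lam x = Pr (K lam (Pr x)) := hfix
        _ = K lam (Pr x) := hPr_self _ (hTmem _ hpx)
        _ = K lam (∑ l, cvec l • g l) := by rw [← h1]
        _ = ∑ l, cvec l • K lam (g l) := by
            rw [map_sum]
            exact Finset.sum_congr rfl fun l _ => by rw [map_smul]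
    have h3 : gram g *ᵥ cvec = fun m => ⟪g m, x⟫_ℝ := by
      funext m
      calc (gram g *ᵥ cvec) m = ∑ l, ⟪g m, g l⟫_ℝ * cvec l := by
            simp [Matrix.mulVec, dotProduct, gram]
        _ = ⟪g m, ∑ l, cvec l • g l⟫_ℝ := by
            rw [inner_sum]
            exact Finset.sum_congr rfl fun l _ => by
              rw [real_inner_smul_right]; ring
        _ = ⟪g m, Pr x⟫_ℝ := by rw [← h1]
        _ = ⟪g m, x⟫_ℝ := by rw [hPrapp]; exact hproj_inner x m
    have h4 : (B' lam * (gram g)⁻¹) *ᵥ (fun m => ⟪g m, x⟫_ℝ) = B' lam *ᵥ cvec := by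
      rw [← h3, Matrix.mulVec_mulVec, Matrix.mul_assoc, hGinv, Matrix.mul_one]
    have h5 : K lam x = ∑ j, (B' lam *ᵥ cvec) j • g j := by
      rw [h2]
      calc ∑ l, cvec l • K lam (g l)
          = ∑ l, ∑ j, cvec l • (B' lam j l • g j) := by
            refine Finset.sum_congr rfl fun l _ => ?_
            rw [hrepr lam hlam l, Finset.smul_sum]
        _ = ∑ j, ∑ l, (B' lam j l * cvec l) • g j := by
            rw [Finset.sum_comm]
            exact Finset.sum_congr rfl fun j _ => Finset.sum_congr rfl fun l _ => by
              rw [smul_smul, mul_comm]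
        _ = ∑ j, (B' lam *ᵥ cvec) j • g j := by
            refine Finset.sum_congr rfl fun j _ => ?_
            rw [← Finset.sum_smul]
            congr 1
    rw [hFapp, h4, h5]
  -- assembly
  have hTend : Filter.Tendsto
      (fun lam => ∑ j, ∑ m, ((B' lam * (gram g)⁻¹) j m) • rankOne (g j) (g m))
      (𝓝[>] (0:ℝ)) (𝓝 KhatU) := by
    rw [hKhatU]
    refine tendsto_finset_sum _ fun j _ => tendsto_finset_sum _ fun m _ => ?_
    refine Filter.Tendsto.smul_const ?_ _
    simp only [Matrix.mul_apply]
    exact tendsto_finset_sum _ fun l _ => (hBt j l).mul_const _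
  refine hTend.congr' ?_
  filter_upwards [self_mem_nhdsWithin] with lam hlam
  exact (hstruct lam hlam).symm
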